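/- Let f : ℝⁿ → ℝ be C² on a box K, and for each finite set S = {x₁, …, x_i} ⊂ K define the underestimator t_i⁻(x) := max over a ∈ S of (f(a) + ∇f(a)·(x − a) − (γ/2)‖x − a‖²), where γ is large enough that f is γ-semiconvex on K and γ ≥ sup_{x∈K} ‖D²f(x)‖. Then there exists a constant C > 0 (independent of i) such that for all i ≥ 1 and all x ∈ K, 0 ≤ f(x) − t_i⁻(x) ≤ C · d(x, S)², where d(x, S) is the Euclidean distance from x to the set S. -/

import Mathlib

/-- Quadratic error bound for the max-plus underestimator built from a finite
set `S` of control points (Lemma `space1`). -/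
theorem maxplus_underestimator_error_bound
    (n : ℕ) (K : Set (EuclideanSpace ℝ (Fin n)))
    (lo hi : EuclideanSpace ℝ (Fin n))
    (hK : K = {x | ∀ i, lo i ≤ x i ∧ x i ≤ hi i})
    (f : EuclideanSpace ℝ (Fin n) → ℝ) (hf : ContDiff ℝ 2 f)
    (γ : ℝ)
    (hsemi : ∀ a ∈ K, ∀ x ∈ K,
      f a + inner ℝ (gradient f a) (x - a) - γ / 2 * ‖x - a‖ ^ 2 ≤ f x)
    (hγ : ∀ x ∈ K, ‖iteratedFDeriv ℝ 2 f x‖ ≤ γ) :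
    ∃ C > 0, ∀ (S : Finset (EuclideanSpace ℝ (Fin n))) (hS : S.Nonempty),
      ↑S ⊆ K → ∀ x ∈ K,
        0 ≤ f x - S.sup' hS
              (fun a => f a + inner ℝ (gradient f a) (x - a) - γ / 2 * ‖x - a‖ ^ 2)
        ∧ f x - S.sup' hS
              (fun a => f a + inner ℝ (gradient f a) (x - a) - γ / 2 * ‖x - a‖ ^ 2)
            ≤ C * (S.inf' hS fun a => ‖x - a‖) ^ 2 := by
  -- K is convex
  have hKconv : Convex ℝ K := by
    subst hK
    intro x hx y hy a b ha hb hab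
    intro i
    have hxi := hx i
    have hyi := hy i
    have : (a • x + b • y) i = a * x i + b * y i := by
      simp [PiLp.add_apply, PiLp.smul_apply, smul_eq_mul]
    rw [this]
    have hlo : a * lo i + b * lo i = lo i := by rw [← add_mul, hab, one_mul]
    have hhi : a * hi i + b * hi i = hi i := by rw [← add_mul, hab, one_mul]
    constructor
    · have h1 := mul_le_mul_of_nonneg_left hxi.1 ha
      have h2 := mul_le_mul_of_nonneg_left hyi.1 hb
      linarith
    · have h1 := mul_le_mul_of_nonneg_left hxi.2 ha
      have h2 := mul_le_mul_of_nonneg_left hyi.2 hb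
      linarith
  -- the derivative map is differentiable
  have hdf : Differentiable ℝ (fderiv ℝ f) := by
    have h1 : ContDiff ℝ 1 (fderiv ℝ f) := hf.fderiv_right (by norm_num)
    exact h1.differentiable one_ne_zero
  -- norm of second derivative as fderiv of fderiv
  have hnorm2 : ∀ y : EuclideanSpace ℝ (Fin n),
      ‖fderiv ℝ (fderiv ℝ f) y‖ = ‖iteratedFDeriv ℝ 2 f y‖ := by
    intro y
    have h0 : ‖iteratedFDeriv ℝ 0 (fderiv ℝ (fderiv ℝ f)) y‖
        = ‖fderiv ℝ (fderiv ℝ f) y‖ := norm_iteratedFDeriv_zero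
    have h1 : ‖iteratedFDeriv ℝ 0 (fderiv ℝ (fderiv ℝ f)) y‖
        = ‖iteratedFDeriv ℝ 1 (fderiv ℝ f) y‖ := by
      rw [norm_iteratedFDeriv_fderiv]
    have h2 : ‖iteratedFDeriv ℝ 1 (fderiv ℝ f) y‖
        = ‖iteratedFDeriv ℝ 2 f y‖ := by
      rw [norm_iteratedFDeriv_fderiv]
    rw [← h0, h1, h2]
  -- Lipschitz bound for fderiv f on K
  have hlip : ∀ a ∈ K, ∀ x ∈ K, ‖fderiv ℝ f x - fderiv ℝ f a‖ ≤ γ * ‖x - a‖ := by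
    intro a ha x hx
    exact hKconv.norm_image_sub_le_of_norm_fderiv_le
      (fun y _ => hdf y)
      (fun y hy => by rw [hnorm2 y]; exact hγ y hy) ha hx
  -- gradient differences
  have hgrad : ∀ a x : EuclideanSpace ℝ (Fin n),
      ‖gradient f x - gradient f a‖ = ‖fderiv ℝ f x - fderiv ℝ f a‖ := by
    intro a x
    unfold gradient
    rw [← map_sub, LinearIsometryEquiv.norm_map]
  -- one-point error bound
  have key : ∀ a ∈ K, ∀ x ∈ K,
      f x - (f a + inner ℝ (gradient f a) (x - a) - γ / 2 * ‖x - a‖ ^ 2)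
        ≤ 2 * γ * ‖x - a‖ ^ 2 := by
    intro a ha x hx
    have h1 := hsemi x hx a ha
    -- h1 : f x + ⟪∇f x, a - x⟫ - γ/2 ‖a - x‖^2 ≤ f a
    have hsym : ‖a - x‖ = ‖x - a‖ := norm_sub_rev a x
    have hinn : (inner ℝ (gradient f x) (a - x) : ℝ)
        = - inner ℝ (gradient f x) (x - a) := by
      rw [← inner_neg_right, neg_sub]
    have hdiff : (inner ℝ (gradient f x) (x - a) : ℝ) - inner ℝ (gradient f a) (x - a)
        = inner ℝ (gradient f x - gradient f a) (x - a) := by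
      rw [inner_sub_left]
    have hcs : (inner ℝ (gradient f x - gradient f a) (x - a) : ℝ)
        ≤ ‖gradient f x - gradient f a‖ * ‖x - a‖ := real_inner_le_norm _ _
    have hl : ‖gradient f x - gradient f a‖ ≤ γ * ‖x - a‖ := by
      rw [hgrad a x]; exact hlip a ha x hx
    have hn : (0 : ℝ) ≤ ‖x - a‖ := norm_nonneg _
    rw [hsym, hinn] at h1
    have hprod : ‖gradient f x - gradient f a‖ * ‖x - a‖ ≤ γ * ‖x - a‖ ^ 2 := by
      nlinarith [mul_le_mul_of_nonneg_right hl hn]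
    linarith [hcs, hprod, hdiff, h1]
  refine ⟨max (2 * γ + 1) 1, lt_of_lt_of_le one_pos (le_max_right _ _), ?_⟩
  intro S hS hSK x hx
  constructor
  · -- lower bound : sup' ≤ f x
    have : S.sup' hS
        (fun a => f a + inner ℝ (gradient f a) (x - a) - γ / 2 * ‖x - a‖ ^ 2) ≤ f x := by
      apply Finset.sup'_le
      intro a haS
      exact hsemi a (hSK haS) x hx
    linarith
  · -- upper bound
    obtain ⟨a, haS, hainf⟩ := S.exists_mem_eq_inf' hS (fun a => ‖x - a‖)
    have haK : a ∈ K := hSK haS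
    have hle : (f a + inner ℝ (gradient f a) (x - a) - γ / 2 * ‖x - a‖ ^ 2)
        ≤ S.sup' hS (fun a => f a + inner ℝ (gradient f a) (x - a) - γ / 2 * ‖x - a‖ ^ 2) :=
      Finset.le_sup' (fun a => f a + inner ℝ (gradient f a) (x - a) - γ / 2 * ‖x - a‖ ^ 2) haS
    have hkey := key a haK x hx
    have hγ0 : 0 ≤ γ := le_trans (norm_nonneg _) (hγ x hx)
    have hCle : 2 * γ ≤ max (2 * γ + 1) 1 :=
      le_trans (by linarith) (le_max_left _ _)
    have hsq : (0:ℝ) ≤ ‖x - a‖ ^ 2 := sq_nonneg _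
    have : 2 * γ * ‖x - a‖ ^ 2 ≤ max (2 * γ + 1) 1 * ‖x - a‖ ^ 2 :=
      mul_le_mul_of_nonneg_right hCle hsq
    rw [hainf]
    linarith
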